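/- Let n ≥ 2 be an integer and let r : I → ℝ be a twice differentiable positive function on an open interval I containing 0 with r(0) = 1, r'(0) = 0, and satisfying r(z)·r''(z) − (n−1)(1 + r'(z)²) = 0 for all z ∈ I. Then 1 + r'(z)² = r(z)^(2n−2) for all z ∈ I. -/

import Mathlib

/-- For a normalized n-catenoid profile function `r` (positive, twice
differentiable on an open interval `I` containing `0`, with `r 0 = 1`, `r' 0 = 0`,
satisfying `r·r'' − (n−1)(1 + r'²) = 0`), the first-order equation
`1 + r'² = r^(2n−2)` holds on `I`. -/
theorem catenoid_profile_first_order (n : ℕ) (hn : 2 ≤ n)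
    (I : Set ℝ) (hIopen : IsOpen I) (hIconn : I.OrdConnected) (h0I : (0 : ℝ) ∈ I)
    (r : ℝ → ℝ)
    (hpos : ∀ z ∈ I, 0 < r z)
    (hdiff : ∀ z ∈ I, DifferentiableAt ℝ r z ∧ DifferentiableAt ℝ (deriv r) z)
    (hr0 : r 0 = 1) (hr'0 : deriv r 0 = 0)
    (hode : ∀ z ∈ I,
      r z * deriv (deriv r) z - ((n : ℝ) - 1) * (1 + (deriv r z) ^ 2) = 0) :
    ∀ z ∈ I, 1 + (deriv r z) ^ 2 = (r z) ^ (2 * n - 2) := by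
  set k : ℕ := 2 * n - 2 with hk
  have hkcast : (k : ℝ) = 2 * (n : ℝ) - 2 := by
    rw [hk, Nat.cast_sub (by omega)]; push_cast; ring
  have hk1 : k - 1 + 1 = k := by omega
  set g : ℝ → ℝ := fun z => (1 + (deriv r z) ^ 2) / (r z) ^ k with hg
  have hgderiv : ∀ z ∈ I, HasDerivAt g 0 z := by
    intro z hz
    have hR : 0 < r z := hpos z hz
    have hr' : HasDerivAt r (deriv r z) z := (hdiff z hz).1.hasDerivAt
    have hr'' : HasDerivAt (deriv r) (deriv (deriv r) z) z := (hdiff z hz).2.hasDerivAt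
    have hnum : HasDerivAt (fun z => 1 + (deriv r z) ^ 2)
        (0 + 2 * (deriv r z) ^ 1 * deriv (deriv r) z) z :=
      (hasDerivAt_const z (1 : ℝ)).add (hr''.pow 2)
    have hden : HasDerivAt (fun z => (r z) ^ k) ((k : ℝ) * (r z) ^ (k - 1) * deriv r z) z :=
      hr'.pow k
    have hdenne : (r z) ^ k ≠ 0 := pow_ne_zero _ hR.ne'
    have hdiv := hnum.div hden hdenne
    have hode' : r z * deriv (deriv r) z = ((n : ℝ) - 1) * (1 + (deriv r z) ^ 2) := by
      have := hode z hz; linarith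
    have hpow : (r z) ^ k = (r z) ^ (k - 1) * r z := by rw [← pow_succ, hk1]
    have hzero : ((0 + 2 * (deriv r z) ^ 1 * deriv (deriv r) z) * (r z) ^ k -
        (1 + (deriv r z) ^ 2) * ((k : ℝ) * (r z) ^ (k - 1) * deriv r z)) / ((r z) ^ k) ^ 2
        = 0 := by
      rw [div_eq_zero_iff]; left
      rw [hpow, hkcast]
      linear_combination (2 * deriv r z * (r z) ^ (k - 1)) * hode'
    rw [hzero] at hdiv
    exact hdiv
  have hconv : Convex ℝ I := hIconn.convex
  have hdiffOn : DifferentiableOn ℝ g I := fun z hz =>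
    ((hgderiv z hz).differentiableAt).differentiableWithinAt
  have hfzero : ∀ z ∈ I, fderivWithin ℝ g I z = 0 := by
    intro z hz
    rw [fderivWithin_of_mem_nhds (hIopen.mem_nhds hz)]
    have : HasFDerivAt g (0 : ℝ →L[ℝ] ℝ) z := by
      have h := (hgderiv z hz).hasFDerivAt
      simpa using h
    exact this.fderiv
  have hg0 : g 0 = 1 := by
    simp [hg, hr0, hr'0]
  intro z hz
  have hgz : g z = g 0 := hconv.is_const_of_fderivWithin_eq_zero hdiffOn hfzero hz h0I
  rw [hg0, hg] at hgz
  have hdenne : (r z) ^ k ≠ 0 := pow_ne_zero _ (hpos z hz).ne'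
  field_simp at hgz
  exact hgz
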